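/- Substitution lemma for the affine λ¢: if r reduces to s with probability p in one step, and t is typable in the affine type system (so each variable occurs free at most once in t), then t[r/x] reduces to t[s/x] with probability p in at most one step (exactly one step if x occurs free in t, and t[r/x] = t[s/x] if x does not occur in t). -/

import Mathlib

/-- Terms of λ¢ (de Bruijn): variables, abstraction, application,
    booleans `one`/`zero`, if-then-else, and a coin. -/
inductive Tm : Type
  | var : Nat → Tm
  | lam : Tm → Tm
  | app : Tm → Tm → Tm
  | one : Tm
  | zero : Tm
  | ite : Tm → Tm → Tm → Tm
  | coin : Tm
  deriving DecidableEq

/-- Lifting of de Bruijn indices (indices ≥ d are incremented). -/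
def lift (d : Nat) : Tm → Tm
  | .var n => if n < d then .var n else .var (n+1)
  | .lam t => .lam (lift (d+1) t)
  | .app t u => .app (lift d t) (lift d u)
  | .one => .one
  | .zero => .zero
  | .ite c a b => .ite (lift d c) (lift d a) (lift d b)
  | .coin => .coin

/-- Capture-avoiding substitution `t[s/k]` (de Bruijn). -/
def subst : Tm → Nat → Tm → Tm
  | .var n, k, s => if n = k then s else if k < n then .var (n-1) else .var n
  | .lam t, k, s => .lam (subst t (k+1) (lift 0 s))
  | .app t u, k, s => .app (subst t k s) (subst u k s)
  | .one, _, _ => .one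
  | .zero, _, _ => .zero
  | .ite c a b, k, s => .ite (subst c k s) (subst a k s) (subst b k s)
  | .coin, _, _ => .coin

/-- One-step probabilistic reduction `t →_p r` of λ¢:
    β, if-rules (probability 1), coin toss (probability 1/2 each),
    closed under all contexts. -/
inductive Step : Tm → ℚ → Tm → Prop
  | beta (t r) : Step (.app (.lam t) r) 1 (subst t 0 r)
  | iteOne (a b) : Step (.ite .one a b) 1 a
  | iteZero (a b) : Step (.ite .zero a b) 1 b
  | coinOne : Step .coin (1/2) .one
  | coinZero : Step .coin (1/2) .zero
  | lam {t p t'} : Step t p t' → Step (.lam t) p (.lam t')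
  | appL {t p t'} (u) : Step t p t' → Step (.app t u) p (.app t' u)
  | appR {u p u'} (t) : Step u p u' → Step (.app t u) p (.app t u')
  | iteC {c p c'} (a b) : Step c p c' → Step (.ite c a b) p (.ite c' a b)
  | iteA {a p a'} (c b) : Step a p a' → Step (.ite c a b) p (.ite c a' b)
  | iteB {b p b'} (c a) : Step b p b' → Step (.ite c a b) p (.ite c a b')

/-- A term is normal if no probabilistic step applies. -/
def NormalTm (t : Tm) : Prop := ¬ ∃ p r, Step t p r

/-- (Sub)probability distributions over terms, as finitely supported maps. -/
abbrev PDist := Tm →₀ ℚ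

/-- Contraction of one redex occurrence of a term, producing the
    distribution of its results: deterministic rules give a Dirac
    distribution, a coin redex splits 1/2–1/2; closed under contexts. -/
inductive TStep : Tm → PDist → Prop
  | beta (t r) : TStep (.app (.lam t) r) (Finsupp.single (subst t 0 r) 1)
  | iteOne (a b) : TStep (.ite .one a b) (Finsupp.single a 1)
  | iteZero (a b) : TStep (.ite .zero a b) (Finsupp.single b 1)
  | coin : TStep .coin (Finsupp.single Tm.one (1/2) + Finsupp.single Tm.zero (1/2))
  | lam {t D} : TStep t D → TStep (.lam t) (D.mapDomain .lam)
  | appL {t D} (u) : TStep t D → TStep (.app t u) (D.mapDomain (fun s => .app s u))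
  | appR {u D} (t) : TStep u D → TStep (.app t u) (D.mapDomain (fun s => .app t s))
  | iteC {c D} (a b) : TStep c D → TStep (.ite c a b) (D.mapDomain (fun s => .ite s a b))
  | iteA {a D} (c b) : TStep a D → TStep (.ite c a b) (D.mapDomain (fun s => .ite c s b))
  | iteB {b D} (c a) : TStep b D → TStep (.ite c a b) (D.mapDomain (fun s => .ite c a s))

/-- One distribution-reduction step: pick a term `t` in the support,
    contract one redex occurrence of `t` and redistribute its probability
    mass accordingly (equal results are merged by the `Finsupp` addition). -/
def DStep (D D' : PDist) : Prop :=
  ∃ t E, D t ≠ 0 ∧ TStep t E ∧ D' = D.erase t + D t • E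

/-- Multistep distribution reduction. -/
def DSteps : PDist → PDist → Prop := Relation.ReflTransGen DStep

/-- A distribution is normal when every term in its support is normal. -/
def NormalDist (D : PDist) : Prop := ∀ t ∈ D.support, NormalTm t

/-- Simple types: booleans and arrows. -/
inductive Ty : Type
  | bool : Ty
  | arrow : Ty → Ty → Ty
  deriving DecidableEq

/-- Typing contexts for the (sub-)affine systems: a partial assignment of
    types to de Bruijn indices. -/
abbrev Ctx := Nat → Option Ty

/-- Extend a context with a (possibly absent) type for the new index 0. -/
def Ctx.cons (A : Option Ty) (Γ : Ctx) : Ctx := fun n =>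
  match n with
  | 0 => A
  | m+1 => Γ m

/-- Disjointness of contexts. -/
def Ctx.disj (Γ Δ : Ctx) : Prop := ∀ n, Γ n = none ∨ Δ n = none

/-- Union of (disjoint) contexts. -/
def Ctx.union (Γ Δ : Ctx) : Ctx := fun n => (Γ n).orElse (fun _ => Δ n)

/-- The empty context. -/
def Ctx.empty : Ctx := fun _ => none

/-- Affine type system for λ¢ (Table 3): disjoint contexts in the
    application rule and pairwise disjoint contexts in the if rule;
    axioms allow weakening. -/
inductive AffTy : Ctx → Tm → Ty → Prop
  | var {Γ n A} : Γ n = some A → AffTy Γ (.var n) A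
  | lam {Γ t A B} : AffTy (Ctx.cons (some A) Γ) t B → AffTy Γ (.lam t) (.arrow A B)
  | app {Γ Δ t u A B} : Ctx.disj Γ Δ →
      AffTy Γ t (.arrow A B) → AffTy Δ u A → AffTy (Ctx.union Γ Δ) (.app t u) B
  | one {Γ} : AffTy Γ .one .bool
  | zero {Γ} : AffTy Γ .zero .bool
  | coin {Γ} : AffTy Γ .coin .bool
  | ite {Γ Δ₁ Δ₂ c a b A} : Ctx.disj Γ Δ₁ → Ctx.disj Γ Δ₂ → Ctx.disj Δ₁ Δ₂ →
      AffTy Γ c .bool → AffTy Δ₁ a A → AffTy Δ₂ b A →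
      AffTy (Ctx.union Γ (Ctx.union Δ₁ Δ₂)) (.ite c a b) A

/-- Number of free occurrences of the de Bruijn variable `k` in a term. -/
def count : Nat → Tm → Nat
  | k, .var n => if n = k then 1 else 0
  | k, .lam t => count (k+1) t
  | k, .app t u => count k t + count k u
  | k, .ite c a b => count k c + count k a + count k b
  | _, .one => 0
  | _, .zero => 0
  | _, .coin => 0

lemma union_eq_none {Γ Δ : Ctx} {x : Nat} (h : Ctx.union Γ Δ x = none) :
    Γ x = none ∧ Δ x = none := by
  unfold Ctx.union at h
  cases hg : Γ x with
  | none => rw [hg] at h; exact ⟨rfl, by simpa [Option.orElse] using h⟩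
  | some a => rw [hg] at h; simp [Option.orElse] at h

lemma lift_lift (s : Tm) : ∀ e d, e ≤ d → lift (d+1) (lift e s) = lift e (lift d s) := by
  induction s with
  | var n =>
    intro e d h
    simp only [lift]
    by_cases h1 : n < e
    · have h2 : n < d := lt_of_lt_of_le h1 h
      simp [lift, h1, h2, Nat.lt_succ_of_lt h2]
    · by_cases h2 : n < d
      · have h3 : n + 1 < d + 1 := by omega
        simp [lift, h1, h2, h3]
      · have h3 : ¬ n + 1 < e := by omega
        have h4 : ¬ n + 1 < d + 1 := by omega
        simp [lift, h1, h2, h3, h4]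
  | lam t ih => intro e d h; simp [lift, ih (e+1) (d+1) (by omega)]
  | app t u iht ihu => intro e d h; simp [lift, iht e d h, ihu e d h]
  | ite c a b ihc iha ihb => intro e d h; simp [lift, ihc e d h, iha e d h, ihb e d h]
  | one => intros; rfl
  | zero => intros; rfl
  | coin => intros; rfl

lemma lift_subst (t : Tm) : ∀ k d (s : Tm), k ≤ d →
    lift d (subst t k s) = subst (lift (d+1) t) k (lift d s) := by
  induction t with
  | var n =>
    intro k d s h
    simp only [subst]
    by_cases h1 : n = k
    · subst h1
      have : n < d + 1 := by omega
      simp [lift, subst, this]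
    · by_cases h2 : k < n
      · by_cases h3 : n < d + 1
        · have h4 : n - 1 < d := by omega
          simp [lift, subst, h1, h2, h3, h4]
        · have h4 : ¬ n - 1 < d := by omega
          have h5 : ¬ n + 1 = k := by omega
          have h6 : k < n + 1 := by omega
          simp [lift, subst, h1, h2, h3, h4, h5, h6]
          omega
      · have h3 : n < d := by omega
        have h4 : n < d + 1 := by omega
        simp [lift, subst, h1, h2, h3, h4]
  | lam t ih =>
    intro k d s h
    simp only [subst, lift]
    rw [ih (k+1) (d+1) (lift 0 s) (by omega), lift_lift s 0 d (by omega)]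
  | app t u iht ihu => intro k d s h; simp [subst, lift, iht k d s h, ihu k d s h]
  | ite c a b ihc iha ihb =>
    intro k d s h; simp [subst, lift, ihc k d s h, iha k d s h, ihb k d s h]
  | one => intros; rfl
  | zero => intros; rfl
  | coin => intros; rfl

lemma step_lift {r s : Tm} {p : ℚ} (h : Step r p s) : ∀ d, Step (lift d r) p (lift d s) := by
  induction h with
  | beta t r =>
    intro d
    have := lift_subst t 0 d r (Nat.zero_le d)
    simp only [lift]
    rw [this]
    exact Step.beta _ _
  | iteOne a b => intro d; exact Step.iteOne _ _
  | iteZero a b => intro d; exact Step.iteZero _ _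
  | coinOne => intro d; exact Step.coinOne
  | coinZero => intro d; exact Step.coinZero
  | lam _ ih => intro d; exact Step.lam (ih (d+1))
  | appL u _ ih => intro d; exact Step.appL _ (ih d)
  | appR t _ ih => intro d; exact Step.appR _ (ih d)
  | iteC a b _ ih => intro d; exact Step.iteC _ _ (ih d)
  | iteA c b _ ih => intro d; exact Step.iteA _ _ (ih d)
  | iteB c a _ ih => intro d; exact Step.iteB _ _ (ih d)

lemma count_none {Γ : Ctx} {t : Tm} {A : Ty} (ht : AffTy Γ t A) :
    ∀ x, Γ x = none → count x t = 0 := by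
  induction ht with
  | var h =>
    intro x hx
    rename_i Γ n A
    have : n ≠ x := by intro he; subst he; rw [hx] at h; exact Option.some_ne_none _ h.symm
    simp [count, this]
  | lam _ ih => intro x hx; exact ih (x+1) hx
  | app hd _ _ iht ihu =>
    intro x hx
    have h1 := union_eq_none hx
    simp [count, iht x h1.1, ihu x h1.2]
  | one => intro x hx; rfl
  | zero => intro x hx; rfl
  | coin => intro x hx; rfl
  | ite h1 h2 h3 _ _ _ ihc iha ihb =>
    intro x hx
    obtain ⟨hg, hu⟩ := union_eq_none hx
    obtain ⟨hu1, hu2⟩ := union_eq_none hu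
    simp [count, ihc x hg, iha x hu1, ihb x hu2]

lemma aff_sub_aux {Γ : Ctx} {t : Tm} {A : Ty} (ht : AffTy Γ t A) :
    ∀ (x : Nat) (r s : Tm) (p : ℚ), Step r p s →
    (count x t = 0 ∧ subst t x r = subst t x s) ∨
    (count x t = 1 ∧ Step (subst t x r) p (subst t x s)) := by
  induction ht with
  | var h =>
    rename_i Γ n A
    intro x r s p hr
    by_cases he : n = x
    · subst he; right; simp [count, subst, hr]
    · left; simp [count, subst, he]
  | lam _ ih =>
    intro x r s p hr
    rcases ih (x+1) (lift 0 r) (lift 0 s) p (step_lift hr 0) with ⟨h0, heq⟩ | ⟨h1, hstep⟩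
    · left; exact ⟨h0, by simp [subst, heq]⟩
    · right; exact ⟨h1, Step.lam hstep⟩
  | app hd ht hu iht ihu =>
    intro x r s p hr
    rename_i Γ Δ t u A B
    have hz : count x t = 0 ∨ count x u = 0 := by
      rcases hd x with h | h
      · exact Or.inl (count_none ht x h)
      · exact Or.inr (count_none hu x h)
    rcases iht x r s p hr with ⟨h0, heq⟩ | ⟨h1, hstep⟩
    · rcases ihu x r s p hr with ⟨h0', heq'⟩ | ⟨h1', hstep'⟩
      · left; exact ⟨by simp [count, h0, h0'], by simp [subst, heq, heq']⟩
      · right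
        refine ⟨by simp [count, h0, h1'], ?_⟩
        simp only [subst]
        rw [heq]
        exact Step.appR _ hstep'
    · have h0' : count x u = 0 := by omega
      rcases ihu x r s p hr with ⟨_, heq'⟩ | ⟨h1', _⟩
      · right
        refine ⟨by simp [count, h1, h0'], ?_⟩
        simp only [subst]
        rw [heq']
        exact Step.appL _ hstep
      · omega
  | one => intro x r s p hr; left; exact ⟨rfl, rfl⟩
  | zero => intro x r s p hr; left; exact ⟨rfl, rfl⟩
  | coin => intro x r s p hr; left; exact ⟨rfl, rfl⟩
  | ite hd1 hd2 hd3 hc ha hb ihc iha ihb =>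
    intro x r s p hr
    rename_i Γ Δ₁ Δ₂ c a b A
    have hz : (count x a = 0 ∧ count x b = 0) ∨ (count x c = 0 ∧ count x b = 0) ∨
        (count x c = 0 ∧ count x a = 0) := by
      rcases hd1 x with hg | hD1
      · rcases hd3 x with hD1 | hD2
        · exact Or.inr (Or.inr ⟨count_none hc x hg, count_none ha x hD1⟩)
        · exact Or.inr (Or.inl ⟨count_none hc x hg, count_none hb x hD2⟩)
      · rcases hd2 x with hg | hD2
        · exact Or.inr (Or.inr ⟨count_none hc x hg, count_none ha x hD1⟩)
        · exact Or.inl ⟨count_none ha x hD1, count_none hb x hD2⟩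
    rcases ihc x r s p hr with ⟨hc0, hceq⟩ | ⟨hc1, hcs⟩ <;>
    rcases iha x r s p hr with ⟨ha0, haeq⟩ | ⟨ha1, has⟩ <;>
    rcases ihb x r s p hr with ⟨hb0, hbeq⟩ | ⟨hb1, hbs⟩
    · left; exact ⟨by simp [count, hc0, ha0, hb0], by simp [subst, hceq, haeq, hbeq]⟩
    · right
      refine ⟨by simp [count, hc0, ha0, hb1], ?_⟩
      simp only [subst]; rw [hceq, haeq]; exact Step.iteB _ _ hbs
    · right
      refine ⟨by simp [count, hc0, ha1, hb0], ?_⟩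
      simp only [subst]; rw [hceq, hbeq]; exact Step.iteA _ _ has
    · omega
    · right
      refine ⟨by simp [count, hc1, ha0, hb0], ?_⟩
      simp only [subst]; rw [haeq, hbeq]; exact Step.iteC _ _ hcs
    · omega
    · omega
    · omega

/-- substitution lemma for the affine λ¢: if `r →_p s` in one
    step and `t` is affinely typable, then `t[r/x]` reduces to `t[s/x]`
    with probability `p` in at most one step — exactly one step if `x`
    occurs (once) free in `t`, and the two terms are equal if `x` does not
    occur in `t`. -/
theorem affine_substitution_lemma {Γ : Ctx} {t : Tm} {A : Ty}
    (ht : AffTy Γ t A) {r s : Tm} {p : ℚ} (x : Nat) (hr : Step r p s) :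
    (count x t = 0 ∧ subst t x r = subst t x s) ∨
    (count x t = 1 ∧ Step (subst t x r) p (subst t x s)) :=
  aff_sub_aux ht x r s p hr
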